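/- In an associative unital algebra over a field containing an invertible q with q² ≠ q^{-2}, suppose C12, C23, C13 and central C1, C2, C3, C123 satisfy the aw(3) relations. Then the element Ω (as defined in the previous statement) also commutes with C23 and with C13. -/

import Mathlib

lemma aw_swap {K A : Type*} [Field K] [Ring A] [Algebra K A]
    (q : K) (hq : q ≠ 0) (hq1 : q + q⁻¹ ≠ 0) (hq2 : q ^ 2 - q⁻¹ ^ 2 ≠ 0)
    (X Y Z a : A)
    (r : X + (q ^ 2 - q⁻¹ ^ 2)⁻¹ • (q • (Y * Z) - q⁻¹ • (Z * Y)) = (q + q⁻¹)⁻¹ • a) :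
    Z * Y = (q ^ 2) • (Y * Z) + (q * (q ^ 2 - q⁻¹ ^ 2)) • X - (q ^ 2 - 1) • a ∧
    Y * Z = (q⁻¹ ^ 2) • (Z * Y) - (q⁻¹ * (q ^ 2 - q⁻¹ ^ 2)) • X + (1 - q⁻¹ ^ 2) • a := by
  have h1 := congrArg (fun t : A => (q ^ 2 - q⁻¹ ^ 2) • t) r
  simp only [smul_add, smul_smul, mul_inv_cancel₀ hq2, one_smul] at h1
  have hc : (q ^ 2 - q⁻¹ ^ 2) * (q + q⁻¹)⁻¹ = q - q⁻¹ := by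
    have h2 : q ^ 2 - q⁻¹ ^ 2 = (q - q⁻¹) * (q + q⁻¹) := by ring
    rw [h2, mul_assoc, mul_inv_cancel₀ hq1, mul_one]
  rw [hc] at h1
  have e0 : (q ^ 2 - q⁻¹ ^ 2) • X + (q • (Y * Z) - q⁻¹ • (Z * Y)) - (q - q⁻¹) • a = 0 :=
    sub_eq_zero.mpr h1
  constructor
  · rw [← sub_eq_zero]
    have h : Z * Y - ((q ^ 2) • (Y * Z) + (q * (q ^ 2 - q⁻¹ ^ 2)) • X - (q ^ 2 - 1) • a)
        = (-q) • ((q ^ 2 - q⁻¹ ^ 2) • X + (q • (Y * Z) - q⁻¹ • (Z * Y)) - (q - q⁻¹) • a) := by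
      match_scalars <;> field_simp <;> ring
    rw [h, e0, smul_zero]
  · rw [← sub_eq_zero]
    have h : Y * Z - ((q⁻¹ ^ 2) • (Z * Y) - (q⁻¹ * (q ^ 2 - q⁻¹ ^ 2)) • X + (1 - q⁻¹ ^ 2) • a)
        = q⁻¹ • ((q ^ 2 - q⁻¹ ^ 2) • X + (q • (Y * Z) - q⁻¹ • (Z * Y)) - (q - q⁻¹) • a) := by
      match_scalars <;> field_simp <;> ring
    rw [h, e0, smul_zero]

set_option maxHeartbeats 16000000 in
lemma aw_core {K A : Type*} [Field K] [Ring A] [Algebra K A]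
    (q : K) (hq : q ≠ 0) (hq1 : q + q⁻¹ ≠ 0) (hq2 : q ^ 2 - q⁻¹ ^ 2 ≠ 0)
    (X Y Z a b c : A)
    (ha : ∀ w : A, Commute a w) (hb : ∀ w : A, Commute b w) (hc : ∀ w : A, Commute c w)
    (r1 : X + (q ^ 2 - q⁻¹ ^ 2)⁻¹ • (q • (Y * Z) - q⁻¹ • (Z * Y)) = (q + q⁻¹)⁻¹ • a)
    (r2 : Y + (q ^ 2 - q⁻¹ ^ 2)⁻¹ • (q • (Z * X) - q⁻¹ • (X * Z)) = (q + q⁻¹)⁻¹ • b)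
    (r3 : Z + (q ^ 2 - q⁻¹ ^ 2)⁻¹ • (q • (X * Y) - q⁻¹ • (Y * X)) = (q + q⁻¹)⁻¹ • c) :
    (q • (X * Y * Z) + (q ^ 2) • X ^ 2 + (q⁻¹ ^ 2) • Y ^ 2 + (q ^ 2) • Z ^ 2
        - q • (X * a) - q⁻¹ • (Y * b) - q • (Z * c)) * Y
      = Y * (q • (X * Y * Z) + (q ^ 2) • X ^ 2 + (q⁻¹ ^ 2) • Y ^ 2 + (q ^ 2) • Z ^ 2
        - q • (X * a) - q⁻¹ • (Y * b) - q • (Z * c)) ∧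
    (q • (X * Y * Z) + (q ^ 2) • X ^ 2 + (q⁻¹ ^ 2) • Y ^ 2 + (q ^ 2) • Z ^ 2
        - q • (X * a) - q⁻¹ • (Y * b) - q • (Z * c)) * Z
      = Z * (q • (X * Y * Z) + (q ^ 2) • X ^ 2 + (q⁻¹ ^ 2) • Y ^ 2 + (q ^ 2) • Z ^ 2
        - q • (X * a) - q⁻¹ • (Y * b) - q • (Z * c)) := by
  -- swap rules
  have hZY := (aw_swap q hq hq1 hq2 X Y Z a r1).1
  have hYX := (aw_swap q hq hq1 hq2 Z X Y c r3).1
  have hZX := (aw_swap q hq hq1 hq2 Y Z X b r2).2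
  have hZY' : ∀ w : A, Z * (Y * w) = (q ^ 2) • (Y * (Z * w)) + (q * (q ^ 2 - q⁻¹ ^ 2)) • (X * w)
      - (q ^ 2 - 1) • (a * w) := fun w => by
    rw [← mul_assoc, hZY]; simp only [sub_mul, add_mul, smul_mul_assoc, mul_assoc]
  have hYX' : ∀ w : A, Y * (X * w) = (q ^ 2) • (X * (Y * w)) + (q * (q ^ 2 - q⁻¹ ^ 2)) • (Z * w)
      - (q ^ 2 - 1) • (c * w) := fun w => by
    rw [← mul_assoc, hYX]; simp only [sub_mul, add_mul, smul_mul_assoc, mul_assoc]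
  have hZX' : ∀ w : A, Z * (X * w) = (q⁻¹ ^ 2) • (X * (Z * w))
      - (q⁻¹ * (q ^ 2 - q⁻¹ ^ 2)) • (Y * w) + (1 - q⁻¹ ^ 2) • (b * w) := fun w => by
    rw [← mul_assoc, hZX]; simp only [sub_mul, add_mul, smul_mul_assoc, mul_assoc]
  -- centrality push rules
  have pXa : ∀ w : A, X * (a * w) = a * (X * w) := fun w => by
    rw [← mul_assoc, ← (ha X).eq, mul_assoc]
  have pYa : ∀ w : A, Y * (a * w) = a * (Y * w) := fun w => by
    rw [← mul_assoc, ← (ha Y).eq, mul_assoc]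
  have pZa : ∀ w : A, Z * (a * w) = a * (Z * w) := fun w => by
    rw [← mul_assoc, ← (ha Z).eq, mul_assoc]
  have pXb : ∀ w : A, X * (b * w) = b * (X * w) := fun w => by
    rw [← mul_assoc, ← (hb X).eq, mul_assoc]
  have pYb : ∀ w : A, Y * (b * w) = b * (Y * w) := fun w => by
    rw [← mul_assoc, ← (hb Y).eq, mul_assoc]
  have pZb : ∀ w : A, Z * (b * w) = b * (Z * w) := fun w => by
    rw [← mul_assoc, ← (hb Z).eq, mul_assoc]
  have pXc : ∀ w : A, X * (c * w) = c * (X * w) := fun w => by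
    rw [← mul_assoc, ← (hc X).eq, mul_assoc]
  have pYc : ∀ w : A, Y * (c * w) = c * (Y * w) := fun w => by
    rw [← mul_assoc, ← (hc Y).eq, mul_assoc]
  have pZc : ∀ w : A, Z * (c * w) = c * (Z * w) := fun w => by
    rw [← mul_assoc, ← (hc Z).eq, mul_assoc]
  have pba : ∀ w : A, b * (a * w) = a * (b * w) := fun w => by
    rw [← mul_assoc, ← (ha b).eq, mul_assoc]
  have pca : ∀ w : A, c * (a * w) = a * (c * w) := fun w => by
    rw [← mul_assoc, ← (ha c).eq, mul_assoc]
  have pcb : ∀ w : A, c * (b * w) = b * (c * w) := fun w => by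
    rw [← mul_assoc, ← (hb c).eq, mul_assoc]
  have qXa : X * a = a * X := ((ha X).symm).eq
  have qYa : Y * a = a * Y := ((ha Y).symm).eq
  have qZa : Z * a = a * Z := ((ha Z).symm).eq
  have qXb : X * b = b * X := ((hb X).symm).eq
  have qYb : Y * b = b * Y := ((hb Y).symm).eq
  have qZb : Z * b = b * Z := ((hb Z).symm).eq
  have qXc : X * c = c * X := ((hc X).symm).eq
  have qYc : Y * c = c * Y := ((hc Y).symm).eq
  have qZc : Z * c = c * Z := ((hc Z).symm).eq
  have qba : b * a = a * b := ((ha b).symm).eq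
  have qca : c * a = a * c := ((ha c).symm).eq
  have qcb : c * b = b * c := ((hb c).symm).eq
  constructor
  · simp only [pow_two, mul_assoc, mul_add, add_mul, mul_sub, sub_mul, smul_mul_assoc,
      mul_smul_comm, smul_smul, smul_add, smul_sub,
      hZY', hZY, hYX', hYX, hZX', hZX,
      pXa, pYa, pZa, pXb, pYb, pZb, pXc, pYc, pZc, pba, pca, pcb,
      qXa, qYa, qZa, qXb, qYb, qZb, qXc, qYc, qZc, qba, qca, qcb]
    match_scalars <;> (try field_simp) <;> (try ring)
  · simp only [pow_two, mul_assoc, mul_add, add_mul, mul_sub, sub_mul, smul_mul_assoc,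
      mul_smul_comm, smul_smul, smul_add, smul_sub,
      hZY', hZY, hYX', hYX, hZX', hZX,
      pXa, pYa, pZa, pXb, pYb, pZb, pXc, pYc, pZc, pba, pca, pcb,
      qXa, qYa, qZa, qXb, qYb, qZb, qXc, qYc, qZc, qba, qca, qcb]
    match_scalars <;> (try field_simp) <;> (try ring)

/-- In an algebra satisfying the `aw(3)` relations with `C1, C2, C3, C123`
central, the Casimir element `Ω` also commutes with `C23` and with `C13`. -/
theorem aw3_casimir_commutes_C23_C13 {K A : Type*} [Field K] [Ring A] [Algebra K A]
    (q : K) (hq : q ≠ 0) (hq1 : q + q⁻¹ ≠ 0) (hq2 : q ^ 2 - q⁻¹ ^ 2 ≠ 0)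
    (C12 C23 C13 C1 C2 C3 C123 : A)
    (hC1 : ∀ x : A, Commute C1 x) (hC2 : ∀ x : A, Commute C2 x)
    (hC3 : ∀ x : A, Commute C3 x) (hC123 : ∀ x : A, Commute C123 x)
    (r1 : C12 + (q ^ 2 - q⁻¹ ^ 2)⁻¹ • (q • (C23 * C13) - q⁻¹ • (C13 * C23)) =
      (q + q⁻¹)⁻¹ • (C1 * C2 + C3 * C123))
    (r2 : C23 + (q ^ 2 - q⁻¹ ^ 2)⁻¹ • (q • (C13 * C12) - q⁻¹ • (C12 * C13)) =
      (q + q⁻¹)⁻¹ • (C2 * C3 + C1 * C123))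
    (r3 : C13 + (q ^ 2 - q⁻¹ ^ 2)⁻¹ • (q • (C12 * C23) - q⁻¹ • (C23 * C12)) =
      (q + q⁻¹)⁻¹ • (C3 * C1 + C2 * C123)) :
    Commute
      (q • (C12 * C23 * C13) + (q ^ 2) • C12 ^ 2 + (q⁻¹ ^ 2) • C23 ^ 2
        + (q ^ 2) • C13 ^ 2
        - q • (C12 * (C1 * C2 + C3 * C123))
        - q⁻¹ • (C23 * (C2 * C3 + C1 * C123))
        - q • (C13 * (C3 * C1 + C2 * C123)))
      C23 ∧
    Commute
      (q • (C12 * C23 * C13) + (q ^ 2) • C12 ^ 2 + (q⁻¹ ^ 2) • C23 ^ 2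
        + (q ^ 2) • C13 ^ 2
        - q • (C12 * (C1 * C2 + C3 * C123))
        - q⁻¹ • (C23 * (C2 * C3 + C1 * C123))
        - q • (C13 * (C3 * C1 + C2 * C123)))
      C13 := by
  have ha : ∀ w : A, Commute (C1 * C2 + C3 * C123) w := fun w =>
    ((hC1 w).mul_left (hC2 w)).add_left ((hC3 w).mul_left (hC123 w))
  have hb : ∀ w : A, Commute (C2 * C3 + C1 * C123) w := fun w =>
    ((hC2 w).mul_left (hC3 w)).add_left ((hC1 w).mul_left (hC123 w))
  have hc : ∀ w : A, Commute (C3 * C1 + C2 * C123) w := fun w =>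
    ((hC3 w).mul_left (hC1 w)).add_left ((hC2 w).mul_left (hC123 w))
  obtain ⟨h1, h2⟩ := aw_core q hq hq1 hq2 C12 C23 C13
    (C1 * C2 + C3 * C123) (C2 * C3 + C1 * C123) (C3 * C1 + C2 * C123)
    ha hb hc r1 r2 r3
  exact ⟨h1, h2⟩
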